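/- arXiv:1208.1875 — 2 statements merged into one kernel-verified Lean document; each statement's English description precedes it below -/
import Mathlib

section
/- Let $0 < \delta < 1$ and let $c$ be a real number with $0 < c < (1+\tan\delta)^{-1/2}$, and set $\eta = (1+\tan\delta)^{-1/2} - c > 0$. Then there exists $\epsilon > 0$ such that for all $w \in \mathbb{C}$ with $0 < |w| < \epsilon$ and $|\arg w| < \delta$, one has $|1 - c w|^2 (1 + \operatorname{Re} w)^2 \ge 1 + \eta |w|$. -/
set_option maxHeartbeats 1000000

open Complex Real

private lemma aux_step1 (x r y : ℝ) (h2 : 2 * x * r ≤ 1) :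
    (1 - 2 * x * r) * (1 + 2 * r) ≤ ((1 - x * r) ^ 2 + (x * y) ^ 2) * (1 + r) ^ 2 := by
  nlinarith [mul_nonneg (sq_nonneg r) (by linarith : (0:ℝ) ≤ 1 - 2 * x * r),
    mul_nonneg (add_nonneg (sq_nonneg (x * r)) (sq_nonneg (x * y))) (sq_nonneg (1 + r))]

private lemma aux_step2 (η q c r A : ℝ) (hη : 0 ≤ η) (hr : 0 < r) (hc : 0 ≤ c)
    (h4 : η * q + 4 * c * q * A ≤ 2 * (1 - c)) (hAqr : A ≤ q * r) (hrqA : r ≤ q * A) :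
    1 + η * A ≤ (1 - 2 * c * r) * (1 + 2 * r) := by
  have e1 : η * A ≤ η * (q * r) := mul_le_mul_of_nonneg_left hAqr hη
  have e2 : η * q * r ≤ (2 * (1 - c) - 4 * c * q * A) * r :=
    mul_le_mul_of_nonneg_right (by linarith) hr.le
  have e3 : r * r ≤ q * A * r := mul_le_mul_of_nonneg_right hrqA hr.le
  have e4 : 4 * c * (r * r) ≤ 4 * c * (q * A * r) :=
    mul_le_mul_of_nonneg_left e3 (by linarith)
  nlinarith [e1, e2, e4]

/-- Key inequality: for `0 < c < (1+tan δ)^{-1/2}` and `η` the gap, for `w`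
small in the sector `|arg w| < δ` one has
`|1-cw|² (1+Re w)² ≥ 1 + η|w|`. -/
theorem stmt12 (δ c : ℝ) (hδ0 : 0 < δ) (hδ1 : δ < 1) (hc0 : 0 < c)
    (hc : c < (Real.sqrt (1 + Real.tan δ))⁻¹) :
    ∃ ε : ℝ, 0 < ε ∧ ∀ w : ℂ, 0 < ‖w‖ → ‖w‖ < ε →
      |w.arg| < δ →
      1 + ((Real.sqrt (1 + Real.tan δ))⁻¹ - c) * ‖w‖ ≤
        ‖1 - c * w‖ ^ 2 * (1 + w.re) ^ 2 := by
  have hπ3 := Real.pi_gt_three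
  have hδπ : δ < π / 2 := by linarith
  set t := Real.tan δ with ht
  have ht0 : 0 < t := Real.tan_pos_of_pos_of_lt_pi_div_two hδ0 hδπ
  -- t < √3
  have ht3 : t < Real.sqrt 3 := by
    have h1 : Real.tan δ < Real.tan (π / 3) :=
      Real.tan_lt_tan_of_nonneg_of_lt_pi_div_two hδ0.le (by linarith) (by linarith)
    rwa [Real.tan_pi_div_three] at h1
  have ht3' : t ^ 2 < 3 := by
    nlinarith [Real.sq_sqrt (by norm_num : (0:ℝ) ≤ 3), Real.sqrt_nonneg 3]
  set s := Real.sqrt (1 + t) with hs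
  have hs2 : s ^ 2 = 1 + t := Real.sq_sqrt (by linarith)
  have hs0 : 0 < s := Real.sqrt_pos.2 (by linarith)
  have hs1 : 1 < s := by nlinarith
  set q := Real.sqrt (1 + t ^ 2) with hq
  have hq2 : q ^ 2 = 1 + t ^ 2 := Real.sq_sqrt (by positivity)
  have hq0 : 0 < q := Real.sqrt_pos.2 (by positivity)
  have hq1 : 1 ≤ q := by nlinarith
  have hqlt2 : q < 2 := by nlinarith
  set η := s⁻¹ - c with hη
  have hu1 : s⁻¹ < 1 := by
    rw [inv_lt_one_iff₀]; right; exact hs1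
  have hη0 : 0 < η := sub_pos.2 hc
  have hc1 : c < 1 := hc.trans hu1
  -- key: η * q < 2 * (1 - c)
  have hkey : η * q < 2 * (1 - c) := by
    have h1 : η * q < η * 2 := by
      exact (mul_lt_mul_of_pos_left hqlt2 hη0)
    have h2 : η * 2 < 2 * (1 - c) := by
      simp only [hη]; nlinarith
    linarith
  refine ⟨min ((2 * (1 - c) - η * q) / (4 * c * q)) ((2 * c)⁻¹), ?_, ?_⟩
  · apply lt_min
    · apply div_pos (by linarith) (by positivity)
    · positivity
  intro w hw0 hwε hwarg
  set A := ‖w‖ with hA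
  set r := w.re with hr
  set i := w.im with hi
  have hwne : w ≠ 0 := by
    intro h; simp [hA, h] at hw0
  have hr0 : 0 < r := by
    have : |w.arg| < π / 2 := lt_of_lt_of_le hwarg (by linarith)
    rcases Complex.abs_arg_lt_pi_div_two_iff.1 this with h | h
    · exact h
    · exact absurd h hwne
  -- |i| ≤ t * r
  have harg2 : |w.arg| < π / 2 := lt_of_lt_of_le hwarg (by linarith)
  have htan : |Real.tan w.arg| < t := by
    have h1 : Real.tan |w.arg| < Real.tan δ :=
      Real.tan_lt_tan_of_nonneg_of_lt_pi_div_two (abs_nonneg _) hδπ hwarg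
    have h2 : Real.tan |w.arg| = |Real.tan w.arg| := by
      rcases le_or_gt 0 w.arg with h | h
      · rw [_root_.abs_of_nonneg h, _root_.abs_of_nonneg
          (Real.tan_nonneg_of_nonneg_of_le_pi_div_two h
            (le_of_lt (lt_of_le_of_lt (le_abs_self _) harg2)))]
      · have hneg : Real.tan w.arg < 0 :=
          Real.tan_neg_of_neg_of_pi_div_two_lt h (neg_lt_of_abs_lt harg2)
        rw [_root_.abs_of_neg h, Real.tan_neg, _root_.abs_of_neg hneg]
    rw [h2] at h1; exact h1
  have him : |i| ≤ t * r := by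
    have := Complex.tan_arg w
    rw [this] at htan
    rw [abs_div] at htan
    rw [_root_.abs_of_pos hr0] at htan
    calc |i| = |i| / r * r := by field_simp
    _ ≤ t * r := by
      apply mul_le_mul_of_nonneg_right htan.le hr0.le
  have hA2 : A ^ 2 = r ^ 2 + i ^ 2 := by
    rw [hA, Complex.sq_norm, Complex.normSq_apply]; ring
  have hrA : r ≤ A := Complex.re_le_norm w
  have hAqr : A ≤ q * r := by
    have h1 : A ^ 2 ≤ (q * r) ^ 2 := by
      have : i ^ 2 ≤ t ^ 2 * r ^ 2 := by nlinarith [abs_nonneg i, _root_.sq_abs i]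
      nlinarith
    have h2 := Real.sqrt_le_sqrt h1
    rwa [Real.sqrt_sq (norm_nonneg w), Real.sqrt_sq (by positivity : (0:ℝ) ≤ q * r)] at h2
  have hε1 : A < (2 * (1 - c) - η * q) / (4 * c * q) := lt_of_lt_of_le hwε (min_le_left _ _)
  have hε2 : A < (2 * c)⁻¹ := lt_of_lt_of_le hwε (min_le_right _ _)
  have h4 : 4 * c * q * A < 2 * (1 - c) - η * q := by
    rw [lt_div_iff₀ (by positivity : (0:ℝ) < 4 * c * q)] at hε1; nlinarith
  have h2cr : 2 * c * r ≤ 1 := by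
    have h5 : 2 * c * A < 1 := by
      have h6 := mul_lt_mul_of_pos_left hε2 (by positivity : (0:ℝ) < 2 * c)
      rwa [mul_inv_cancel₀ (by positivity : (2:ℝ) * c ≠ 0)] at h6
    have h7 := mul_le_mul_of_nonneg_left hrA (by positivity : (0:ℝ) ≤ 2 * c)
    linarith
  have habs : ‖1 - ↑c * w‖ ^ 2 = (1 - c * r) ^ 2 + (c * i) ^ 2 := by
    rw [Complex.sq_norm, Complex.normSq_apply]
    simp [hr, hi]
    ring
  rw [habs]
  have hstep1 : (1 - 2 * c * r) * (1 + 2 * r) ≤ ((1 - c * r) ^ 2 + (c * i) ^ 2) * (1 + r) ^ 2 :=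
    aux_step1 c r i h2cr
  have hstep2 : 1 + η * A ≤ (1 - 2 * c * r) * (1 + 2 * r) :=
    aux_step2 η q c r A hη0.le hr0 hc0.le (by linarith) hAqr
      (hrA.trans (le_mul_of_one_le_left (norm_nonneg w) hq1))
  calc 1 + η * A ≤ (1 - 2 * c * r) * (1 + 2 * r) := hstep2
  _ ≤ _ := hstep1
end

section
/- Let $f(z) = z - \frac{1}{\nu-1} z^{\nu} + g(z)$ where $\nu \ge 2$ is an integer and $g$ is holomorphic near $0$ with $g(z) = O(z^{\nu+1})$. Then there exist $C, \epsilon > 0$ such that for all $z$ with $0 < |z| < \epsilon$ and $|\arg z| < \pi/(2(\nu-1))$ (so that $f(z) \ne 0$), $\left| \frac{1}{f(z)^{\nu-1}} - \frac{1}{z^{\nu-1}} - 1 \right| \le C |z|$. -/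
open Complex

lemma key_ident (m : ℕ) (u : ℂ) :
    1 - (1 + m*u)*(1-u)^m = u^2 * ∑ k ∈ Finset.range m, ((k:ℂ)+1)*(1-u)^k := by
  induction m with
  | zero => simp
  | succ n ih =>
      rw [Finset.sum_range_succ]
      push_cast
      linear_combination ih


/-- Fatou coordinate estimate: for `f(z) = z - z^ν/(ν-1) + g(z)` with `g`
holomorphic near `0` and `g(z) = O(z^{ν+1})`, on a sector one has
`|1/f(z)^{ν-1} - 1/z^{ν-1} - 1| ≤ C|z|`. -/
theorem stmt15 (ν : ℕ) (hν : 2 ≤ ν) (g : ℂ → ℂ) (hg : AnalyticAt ℂ g 0)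
    (hgO : ∃ C₀ r : ℝ, 0 < C₀ ∧ 0 < r ∧ ∀ z : ℂ, ‖z‖ < r →
      ‖g z‖ ≤ C₀ * ‖z‖ ^ (ν + 1))
    (f : ℂ → ℂ) (hf : ∀ z, f z = z - z ^ ν / ((ν : ℂ) - 1) + g z) :
    ∃ C ε : ℝ, 0 < C ∧ 0 < ε ∧ ∀ z : ℂ, 0 < ‖z‖ →
      ‖z‖ < ε → |z.arg| < Real.pi / (2 * ((ν : ℝ) - 1)) →
      f z ≠ 0 ∧
        ‖1 / f z ^ (ν - 1) - 1 / z ^ (ν - 1) - 1‖ ≤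
          C * ‖z‖ := by
  obtain ⟨C₀, r, hC₀, hr, hbound⟩ := hgO
  obtain ⟨m, rfl⟩ : ∃ m, ν = m + 1 := ⟨ν - 1, by omega⟩
  have hm1 : 1 ≤ m := by omega
  have hmC : (m:ℂ) ≠ 0 := Nat.cast_ne_zero.mpr (by omega)
  have hmR : (1:ℝ) ≤ m := by exact_mod_cast hm1
  refine ⟨(1+C₀)^2 * m^2 * 3^m + m*C₀, min r (min 1 (1/(2*(1+C₀)))), by positivity,
    lt_min hr (lt_min one_pos (by positivity)), ?_⟩
  intro z hz0 hzε _harg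
  have hz : z ≠ 0 := by simpa using (norm_pos_iff.mp hz0)
  have hzr : ‖z‖ < r := lt_of_lt_of_le hzε (min_le_left _ _)
  have hz1 : ‖z‖ ≤ 1 :=
    le_of_lt (lt_of_lt_of_le hzε (le_trans (min_le_right _ _) (min_le_left _ _)))
  have hzhalf : (1+C₀) * ‖z‖ ≤ 1/2 := by
    have h := le_of_lt (lt_of_lt_of_le hzε (le_trans (min_le_right _ _) (min_le_right _ _)))
    rw [le_div_iff₀ (by positivity)] at h ⊢
    nlinarith
  have habs0 : (0:ℝ) ≤ ‖z‖ := norm_nonneg z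
  have hgz : ‖g z‖ ≤ C₀ * ‖z‖ ^ (m + 2) := hbound z hzr
  obtain ⟨u, hu_def⟩ : ∃ u : ℂ, u = z^m/(m:ℂ) - g z / z := ⟨_, rfl⟩
  have habs_u : ‖u‖ ≤ (1+C₀) * ‖z‖ ^ m := by
    have h1 : ‖z^m/(m:ℂ)‖ ≤ ‖z‖ ^ m := by
      rw [norm_div, norm_pow]
      simp only [Complex.norm_natCast]
      rw [div_le_iff₀ (by positivity)]
      nlinarith [pow_nonneg habs0 m]
    have h2 : ‖g z / z‖ ≤ C₀ * ‖z‖ ^ m := by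
      rw [norm_div, div_le_iff₀ hz0]
      calc ‖g z‖ ≤ C₀ * ‖z‖ ^ (m + 2) := hgz
        _ = C₀ * ‖z‖ ^ (m+1) * ‖z‖ := by ring
        _ ≤ C₀ * ‖z‖ ^ m * ‖z‖ := by
            have hp : ‖z‖ ^ (m+1) ≤ ‖z‖ ^ m :=
              pow_le_pow_of_le_one habs0 hz1 (by omega : m ≤ m+1)
            exact mul_le_mul_of_nonneg_right (mul_le_mul_of_nonneg_left hp hC₀.le) habs0
    calc ‖u‖ ≤ ‖z^m/(m:ℂ)‖ + ‖g z / z‖ := by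
          rw [hu_def]; simpa using norm_sub_le (z^m/(m:ℂ)) (g z / z)
      _ ≤ (1+C₀) * ‖z‖ ^ m := by nlinarith
  have hzm_le : ‖z‖ ^ m ≤ ‖z‖ := by
    calc ‖z‖ ^ m ≤ ‖z‖ ^ 1 := pow_le_pow_of_le_one habs0 hz1 hm1
      _ = ‖z‖ := pow_one _
  have hu_half : ‖u‖ ≤ 1/2 := by
    calc ‖u‖ ≤ (1+C₀) * ‖z‖ ^ m := habs_u
      _ ≤ (1+C₀) * ‖z‖ := by nlinarith
      _ ≤ 1/2 := hzhalf
  have h1u_ge : (1:ℝ)/2 ≤ ‖1 - u‖ := by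
    have h := norm_sub_norm_le (1:ℂ) u
    simp only [norm_one] at h
    linarith
  have h1u_le : ‖1 - u‖ ≤ 3/2 := by
    have h := norm_sub_le (1:ℂ) u
    simp only [norm_one] at h
    linarith
  have h1u_ne : (1:ℂ) - u ≠ 0 := by
    intro h
    rw [h] at h1u_ge
    simp at h1u_ge
    linarith
  have hfz : f z = z * (1 - u) := by
    rw [hf, hu_def]
    push_cast
    field_simp
    linear_combination (-(z * z ^ m)) * mul_inv_cancel₀ hmC
  have hfne : f z ≠ 0 := hfz ▸ mul_ne_zero hz h1u_ne
  refine ⟨hfne, ?_⟩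
  simp only [Nat.add_sub_cancel]
  have hg_eq : g z = z^(m+1)/(m:ℂ) - z*u := by
    rw [hu_def]
    field_simp
    ring
  have hid : 1 / f z ^ m - 1 / z ^ m - 1
      = (u^2 * ∑ k ∈ Finset.range m, ((k:ℂ)+1)*(1-u)^k) / (z^m * (1-u)^m)
        - (m:ℂ) * g z / z^(m+1) := by
    rw [hfz, mul_pow, ← key_ident, hg_eq]
    field_simp
    ring
  have hS : ‖∑ k ∈ Finset.range m, ((k:ℂ)+1)*(1-u)^k‖ ≤ m^2 * (3/2)^m := by
    calc ‖∑ k ∈ Finset.range m, ((k:ℂ)+1)*(1-u)^k‖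
        ≤ ∑ k ∈ Finset.range m, ‖((k:ℂ)+1)*(1-u)^k‖ := by
          simpa using norm_sum_le (Finset.range m) (fun k => ((k:ℂ)+1)*(1-u)^k)
      _ ≤ ∑ _k ∈ Finset.range m, ((m:ℝ) * (3/2)^m) := by
          apply Finset.sum_le_sum
          intro k hk
          rw [norm_mul, norm_pow]
          have hcast : ((k:ℂ)+1) = ((k+1:ℕ):ℂ) := by push_cast; ring
          rw [hcast, Complex.norm_natCast]
          have hk1 : ((k+1:ℕ):ℝ) ≤ (m:ℝ) := by
            exact_mod_cast Nat.succ_le_of_lt (Finset.mem_range.mp hk)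
          have hp1 : ‖1-u‖^k ≤ ((3:ℝ)/2)^k :=
            pow_le_pow_left₀ (norm_nonneg _) h1u_le k
          have hp2 : ((3:ℝ)/2)^k ≤ ((3:ℝ)/2)^m :=
            pow_le_pow_right₀ (by norm_num) (le_of_lt (Finset.mem_range.mp hk))
          have : ‖1-u‖^k ≤ ((3:ℝ)/2)^m := le_trans hp1 hp2
          exact mul_le_mul hk1 this (by positivity) (Nat.cast_nonneg m)
      _ = (m:ℝ) * ((m:ℝ) * (3/2)^m) := by
          rw [Finset.sum_const, Finset.card_range, nsmul_eq_mul]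
      _ = (m:ℝ)^2 * (3/2)^m := by ring
  have h32 : ((3:ℝ)/2)^m = 3^m * (1/2)^m := by
    rw [← mul_pow]; norm_num
  have t1b : ‖(u^2 * ∑ k ∈ Finset.range m, ((k:ℂ)+1)*(1-u)^k) / (z^m * (1-u)^m)‖
      ≤ (1+C₀)^2 * (m:ℝ)^2 * 3^m * ‖z‖ := by
    rw [norm_div, norm_mul, norm_mul, norm_pow, norm_pow, norm_pow]
    rw [div_le_iff₀ (by positivity)]
    calc ‖u‖ ^ 2 * ‖∑ k ∈ Finset.range m, ((k:ℂ)+1)*(1-u)^k‖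
        ≤ ((1+C₀) * ‖z‖ ^ m)^2 * ((m:ℝ)^2 * (3/2)^m) := by
          apply mul_le_mul (pow_le_pow_left₀ (norm_nonneg u) habs_u 2) hS
            (norm_nonneg _) (by positivity)
      _ = ((1+C₀)^2 * (m:ℝ)^2 * 3^m) * (‖z‖ ^ m) * (‖z‖ ^ m * (1/2)^m) := by
          rw [h32]; ring
      _ ≤ ((1+C₀)^2 * (m:ℝ)^2 * 3^m) * (‖z‖) * (‖z‖ ^ m * ‖1-u‖ ^ m) := by
          have hpow : ((1:ℝ)/2)^m ≤ ‖1-u‖ ^ m :=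
            pow_le_pow_left₀ (by norm_num) h1u_ge m
          gcongr
      _ = ((1+C₀)^2 * (m:ℝ)^2 * 3^m * ‖z‖) * (‖z‖ ^ m * ‖1-u‖ ^ m) := by
          ring
  have t2b : ‖(m:ℂ) * g z / z^(m+1)‖ ≤ (m:ℝ) * C₀ * ‖z‖ := by
    rw [norm_div, norm_mul, norm_pow, Complex.norm_natCast]
    rw [div_le_iff₀ (by positivity)]
    calc (m:ℝ) * ‖g z‖ ≤ (m:ℝ) * (C₀ * ‖z‖ ^ (m+2)) :=
          mul_le_mul_of_nonneg_left hgz (Nat.cast_nonneg m)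
      _ = (m:ℝ) * C₀ * ‖z‖ * ‖z‖ ^ (m+1) := by ring
  rw [hid]
  calc ‖(u^2 * ∑ k ∈ Finset.range m, ((k:ℂ)+1)*(1-u)^k) / (z^m * (1-u)^m)
          - (m:ℂ) * g z / z^(m+1)‖
      ≤ ‖(u^2 * ∑ k ∈ Finset.range m, ((k:ℂ)+1)*(1-u)^k) / (z^m * (1-u)^m)‖
        + ‖(m:ℂ) * g z / z^(m+1)‖ := by
        exact norm_sub_le _ _
    _ ≤ (1+C₀)^2 * (m:ℝ)^2 * 3^m * ‖z‖ + (m:ℝ) * C₀ * ‖z‖ :=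
        add_le_add t1b t2b
    _ = ((1+C₀)^2 * (m:ℝ)^2 * 3^m + (m:ℝ)*C₀) * ‖z‖ := by ring
end
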